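/- Let k ≥ 1 and m ≥ 2k+1 be natural numbers. For every consistent family of k signed edge conditions on Fin m, there exists a simple graph G on Fin m that satisfies every condition in the family and is 2-clique-colorable. (In the paper's terminology: the problem 2CC is (2k+1,k)-universal for every k ≥ 1.) -/

import Mathlib

/-- A set of vertices is a maximal clique if it is a clique and no strict
superset of it is a clique. -/
def IsMaximalClique {V : Type*} (G : SimpleGraph V) (s : Set V) : Prop :=
  G.IsClique s ∧ ∀ t : Set V, G.IsClique t → s ⊆ t → s = t

/-- A set of vertices is monochromatic under a 2-coloring `c` if `c` is
constant on it. -/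
def MonochromaticOn {V : Type*} (c : V → Bool) (s : Set V) : Prop :=
  ∀ u ∈ s, ∀ v ∈ s, c u = c v

/-- `G` is 2-clique-colorable if some 2-coloring makes every maximal clique
with at least two vertices nonmonochromatic. -/
def TwoCliqueColorable {V : Type*} (G : SimpleGraph V) : Prop :=
  ∃ c : V → Bool, ∀ s : Set V, IsMaximalClique G s →
    (∃ u ∈ s, ∃ v ∈ s, u ≠ v) → ¬ MonochromaticOn c s

/-- A graph `G` satisfies a signed edge condition `((u, v), sign)` if `u` and
`v` are adjacent when the sign is `true`, and nonadjacent when it is `false`. -/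
def SatisfiesCond {m : ℕ} (G : SimpleGraph (Fin m)) (c : (Fin m × Fin m) × Bool) : Prop :=
  if c.2 = true then G.Adj c.1.1 c.1.2 else ¬ G.Adj c.1.1 c.1.2

/-- 2CC is (2k+1, k)-universal: any consistent family of k signed edge
conditions on `Fin m` (m ≥ 2k+1) has a model that is 2-clique-colorable. -/
theorem twoCC_universal (k m : ℕ) (hk : 1 ≤ k) (hm : 2 * k + 1 ≤ m)
    (cond : Fin k → (Fin m × Fin m) × Bool)
    (hcons : ∃ G : SimpleGraph (Fin m), ∀ i, SatisfiesCond G (cond i)) :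
    ∃ G : SimpleGraph (Fin m),
      (∀ i, SatisfiesCond G (cond i)) ∧ TwoCliqueColorable G := by
  classical
  obtain ⟨G0, hG0⟩ := hcons
  -- find a vertex w not used in any condition
  obtain ⟨w, hw⟩ : ∃ w : Fin m, ∀ i, w ≠ (cond i).1.1 ∧ w ≠ (cond i).1.2 := by
    set S : Finset (Fin m) :=
      Finset.univ.image (fun i => (cond i).1.1) ∪
        Finset.univ.image (fun i => (cond i).1.2) with hS
    have hcard : S.card < m := by
      have h1 : S.card ≤ k + k := le_trans (Finset.card_union_le _ _)
        (add_le_add (Finset.card_image_le.trans (by simp))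
          (Finset.card_image_le.trans (by simp)))
      omega
    by_contra hcon
    push_neg at hcon
    have huniv : (Finset.univ : Finset (Fin m)) ⊆ S := by
      intro x _
      obtain ⟨i, hi⟩ := hcon x
      simp [hS]
      by_cases h : x = (cond i).1.1
      · exact Or.inl ⟨i, h.symm⟩
      · exact Or.inr ⟨i, (hi h).symm⟩
    have := Finset.card_le_card huniv
    simp [Finset.card_fin] at this
    omega
  let G : SimpleGraph (Fin m) :=
    { Adj := fun u v => u ≠ v ∧ (u = w ∨ v = w ∨
        ∃ i, (cond i).2 = true ∧ ((cond i).1 = (u, v) ∨ (cond i).1 = (v, u)))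
      symm := by
        constructor
        rintro u v ⟨h1, h2⟩
        refine ⟨h1.symm, ?_⟩
        rcases h2 with h | h | ⟨i, hi, hp⟩
        · exact Or.inr (Or.inl h)
        · exact Or.inl h
        · exact Or.inr (Or.inr ⟨i, hi, hp.symm⟩)
      loopless := ⟨fun u h => h.1 rfl⟩ }
  have hGadj : ∀ u v, G.Adj u v ↔ u ≠ v ∧ (u = w ∨ v = w ∨
      ∃ i, (cond i).2 = true ∧ ((cond i).1 = (u, v) ∨ (cond i).1 = (v, u))) :=
    fun u v => Iff.rfl
  refine ⟨G, ?_, ?_⟩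
  · intro i
    have h0 := hG0 i
    simp only [SatisfiesCond] at h0 ⊢
    rcases hb : (cond i).2 with _ | _
    · simp only [hb] at h0 ⊢
      simp only [Bool.false_eq_true, if_false] at h0 ⊢
      rintro ⟨hne, hcase⟩
      rcases hcase with h | h | ⟨j, hj, hpair⟩
      · exact (hw i).1 h.symm
      · exact (hw i).2 h.symm
      · have hj0 := hG0 j
        simp only [SatisfiesCond, hj, if_true] at hj0
        rcases hpair with h | h
        · exact h0 (by rw [h] at hj0; exact hj0)
        · exact h0 (by rw [h] at hj0; exact hj0.symm)
    · simp only [hb, if_true] at h0 ⊢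
      exact ⟨h0.ne, Or.inr (Or.inr ⟨i, hb, Or.inl rfl⟩)⟩
  · refine ⟨fun v => decide (v = w), ?_⟩
    rintro s ⟨hclique, hmax⟩ ⟨u, hu, v, hv, huv⟩ hmono
    have hws : w ∈ s := by
      have hcl : G.IsClique (insert w s) := by
        apply hclique.insert
        intro b hb hbw
        exact ⟨hbw, Or.inl rfl⟩
      have := hmax (insert w s) hcl (Set.subset_insert w s)
      rw [this]
      exact Set.mem_insert w s
    have hx : ∃ x ∈ s, x ≠ w := by
      by_cases hu' : u = w
      · exact ⟨v, hv, fun h => huv (hu'.trans h.symm)⟩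
      · exact ⟨u, hu, hu'⟩
    obtain ⟨x, hxs, hxw⟩ := hx
    have := hmono x hxs w hws
    simp [hxw] at this
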